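/- Let A be a commutative Noetherian ring, let p be a prime ideal of A, and let a ∈ A be an element whose image in the localization A_p is a nonzerodivisor. Then there exists g ∈ A with g ∉ p such that the image of a in the localization A_g (localization away from g) is a nonzerodivisor in A_g. -/

import Mathlib

/-- Let `A` be a commutative Noetherian ring, `p` a prime ideal of `A`, and `a ∈ A` an element
whose image in the localization `A_p` is a nonzerodivisor. Then there exists `g ∈ A` with
`g ∉ p` such that the image of `a` in the localization `A_g` (localization away from `g`) is a
nonzerodivisor in `A_g`. -/
theorem stmt2 {A : Type*} [CommRing A] [IsNoetherianRing A] (p : Ideal A) [p.IsPrime] (a : A)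
    (ha : algebraMap A (Localization.AtPrime p) a ∈
      nonZeroDivisors (Localization.AtPrime p)) :
    ∃ g : A, g ∉ p ∧ algebraMap A (Localization.Away g) a ∈
      nonZeroDivisors (Localization.Away g) := by
  classical
  -- the annihilator of `a`
  set I : Ideal A := LinearMap.ker (LinearMap.mulRight A a) with hIdef
  obtain ⟨S, hS⟩ : I.FG := IsNoetherian.noetherian I
  -- each generator of the annihilator is killed by some element outside `p`
  have key : ∀ x ∈ S, ∃ s : A, s ∉ p ∧ s * x = 0 := by
    intro x hx
    have hxI : x ∈ I := hS ▸ Ideal.subset_span hx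
    have hxa : x * a = 0 := by simpa [hIdef, LinearMap.mem_ker] using hxI
    have hx0 : algebraMap A (Localization.AtPrime p) x = 0 := by
      apply ha.2
      rw [← map_mul, hxa, map_zero]
    obtain ⟨m, hm⟩ := (IsLocalization.map_eq_zero_iff p.primeCompl
      (Localization.AtPrime p) x).mp hx0
    exact ⟨m.1, m.2, hm⟩
  choose! f hf1 hf2 using key
  refine ⟨S.prod f, ?_, ?_⟩
  · -- the product is outside `p` since `primeCompl` is a submonoid
    have : S.prod f ∈ p.primeCompl :=
      Submonoid.prod_mem _ (fun x hx => hf1 x hx)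
    exact this
  · -- `g := S.prod f` kills the annihilator of `a`
    set g : A := S.prod f with hg
    have hkill : ∀ x ∈ S, g * x = 0 := by
      intro x hx
      calc g * x = (S.erase x).prod f * (f x * x) := by
            rw [hg, ← Finset.mul_prod_erase S f hx]; ring
        _ = 0 := by rw [hf2 x hx, mul_zero]
    have hkillI : ∀ y ∈ I, g * y = 0 := by
      intro y hy
      rw [← hS] at hy
      refine Submodule.span_induction ?_ ?_ ?_ ?_ hy
      · exact fun x hx => hkill x hx
      · simp
      · intro y z _ _ hy hz; rw [mul_add, hy, hz, add_zero]
      · intro c y _ hy; rw [smul_eq_mul, ← mul_assoc, mul_comm g c, mul_assoc, hy, mul_zero]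
    rw [mem_nonZeroDivisors_iff_right]
    intro z hz
    obtain ⟨⟨x, s⟩, rfl⟩ := IsLocalization.mk'_surjective (Submonoid.powers g) z
    have hz' : algebraMap A (Localization.Away g) (x * a) = 0 := by
      rw [map_mul, ← IsLocalization.mk'_spec' (Localization.Away g) x s, mul_assoc, hz,
        mul_zero]
    obtain ⟨c, hc⟩ := (IsLocalization.map_eq_zero_iff (Submonoid.powers g)
      (Localization.Away g) (x * a)).mp hz'
    obtain ⟨m, hm⟩ := c.2
    have hmem : (c : A) * x ∈ I := by
      simp only [hIdef, LinearMap.mem_ker, LinearMap.mulRight_apply]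
      rw [mul_assoc]; exact hc
    have hgcx : g * ((c : A) * x) = 0 := hkillI _ hmem
    have hx0 : algebraMap A (Localization.Away g) x = 0 := by
      refine (IsLocalization.map_eq_zero_iff (Submonoid.powers g)
        (Localization.Away g) x).mpr ⟨⟨g * c, ?_⟩, by show g * (c : A) * x = 0; rw [mul_assoc]; exact hgcx⟩
      rw [← hm]
      exact ⟨m + 1, by ring⟩
    show IsLocalization.mk' (Localization.Away g) x s = 0
    rw [IsLocalization.mk'_eq_mul_mk'_one, hx0, zero_mul]
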